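/- arXiv:1705.04382 — 2 statements merged into one kernel-verified Lean document; each statement's English description precedes it below -/
import Mathlib

section
/- ζ(3) = (−3/2) · ∫_0^1 ∫_0^1 (log y)² / ((1−xy)·log(xy)) dx dy. -/
open MeasureTheory Real Filter Set intervalIntegral

section ZetaThreeAux

-- log bound
lemma log_sq_le (u : ℝ) (hu : u ∈ Set.Ioc (0:ℝ) 1) :
    (Real.log u) ^ 2 ≤ 16 * u ^ (-(1/2) : ℝ) := by
  obtain ⟨h0, h1⟩ := hu
  have hr : (0:ℝ) < u ^ (-(1/4):ℝ) := Real.rpow_pos_of_pos h0 _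
  have hl := Real.log_le_sub_one_of_pos hr
  rw [Real.log_rpow h0] at hl
  have h2 : -Real.log u ≤ 4 * u ^ (-(1/4):ℝ) := by nlinarith
  have h3 : (0:ℝ) ≤ -Real.log u := by
    have := Real.log_nonpos (le_of_lt h0) h1; linarith
  have h4 : (Real.log u)^2 = (-Real.log u)^2 := by ring
  have h5 : (-Real.log u)^2 ≤ (4 * u ^ (-(1/4):ℝ))^2 := by
    exact pow_le_pow_left₀ h3 h2 2
  have h6 : (u ^ (-(1/4):ℝ))^2 = u ^ (-(1/2):ℝ) := by
    rw [← Real.rpow_natCast (u ^ (-(1/4):ℝ)) 2, ← Real.rpow_mul (le_of_lt h0)]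
    norm_num
  calc (Real.log u)^2 = (-Real.log u)^2 := h4
    _ ≤ (4 * u ^ (-(1/4):ℝ))^2 := h5
    _ = 16 * u ^ (-(1/2):ℝ) := by rw [mul_pow, h6]; norm_num

lemma integrableOn_log_sq : IntegrableOn (fun u : ℝ => (Real.log u)^2) (Set.Ioc 0 1) := by
  have hg : IntegrableOn (fun u : ℝ => 16 * u ^ (-(1/2):ℝ)) (Set.Ioc 0 1) := by
    have := (intervalIntegral.intervalIntegrable_rpow' (a := 0) (b := 1)
      (r := (-(1/2):ℝ)) (by norm_num)).1
    exact this.const_mul 16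
  refine hg.integrable.mono' ?_ ?_
  · exact ((Real.measurable_log.pow_const 2).aestronglyMeasurable)
  · filter_upwards [ae_restrict_mem measurableSet_Ioc] with u hu
    rw [Real.norm_eq_abs, abs_of_nonneg (by positivity)]
    exact log_sq_le u hu

lemma intInt_pow_log_sq (n : ℕ) :
    IntervalIntegrable (fun u : ℝ => u^n * (Real.log u)^2) volume 0 1 := by
  rw [intervalIntegrable_iff_integrableOn_Ioc_of_le zero_le_one]
  refine integrableOn_log_sq.integrable.mono' ?_ ?_
  · exact ((measurable_id.pow_const n).mul (Real.measurable_log.pow_const 2)).aestronglyMeasurable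
  · filter_upwards [ae_restrict_mem measurableSet_Ioc] with u hu
    rw [Real.norm_eq_abs, abs_of_nonneg (mul_nonneg (pow_nonneg hu.1.le n) (sq_nonneg _))]
    have h1 : u^n ≤ 1 := pow_le_one₀ hu.1.le hu.2
    nlinarith [sq_nonneg (Real.log u)]

lemma tendsto_pow_mul_log_sq (n : ℕ) :
    Tendsto (fun u : ℝ => u^(n+1) * (Real.log u)^2) (nhdsWithin 0 (Set.Ioi 0)) (nhds 0) := by
  have h := tendsto_log_mul_rpow_nhdsGT_zero (r := ((n:ℝ)+1)/2) (by positivity)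
  have h2 := h.mul h
  rw [mul_zero] at h2
  refine h2.congr' ?_
  filter_upwards [self_mem_nhdsWithin] with u (hu : 0 < u)
  have : (u ^ (((n:ℝ)+1)/2)) * (u ^ (((n:ℝ)+1)/2)) = u ^ (n+1) := by
    rw [← Real.rpow_add hu, ← Real.rpow_natCast u (n+1)]
    push_cast; ring_nf
  calc Real.log u * u ^ (((n:ℝ)+1)/2) * (Real.log u * u ^ (((n:ℝ)+1)/2))
      = (u ^ (((n:ℝ)+1)/2) * u ^ (((n:ℝ)+1)/2)) * (Real.log u)^2 := by ring
    _ = u^(n+1) * (Real.log u)^2 := by rw [this]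

lemma tendsto_pow_mul_log_one (n : ℕ) :
    Tendsto (fun u : ℝ => u^(n+1) * Real.log u) (nhdsWithin 0 (Set.Ioi 0)) (nhds 0) := by
  have h := tendsto_log_mul_rpow_nhdsGT_zero (r := ((n:ℝ)+1)) (by positivity)
  refine h.congr' ?_
  filter_upwards [self_mem_nhdsWithin] with u (hu : 0 < u)
  rw [← Real.rpow_natCast u (n+1)]
  push_cast; ring

lemma integral_pow_mul_log_sq (n : ℕ) :
    ∫ u in (0:ℝ)..1, u^n * (Real.log u)^2 = 2/((n:ℝ)+1)^3 := by
  set c : ℝ := (n:ℝ) + 1 with hc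
  have hc0 : c ≠ 0 := by positivity
  set F : ℝ → ℝ := fun u => u^(n+1) * ((Real.log u)^2/c - 2*Real.log u/c^2 + 2/c^3) with hF
  have hderiv : ∀ x ∈ Set.Ioo (0:ℝ) 1, HasDerivAt F (x^n * (Real.log x)^2) x := by
    intro x hx
    have hx0 : x ≠ 0 := hx.1.ne'
    have d1 : HasDerivAt (fun u : ℝ => u^(n+1)) ((n+1) * x^n) x := by
      simpa using hasDerivAt_pow (n+1) x
    have dlog : HasDerivAt Real.log x⁻¹ x := Real.hasDerivAt_log hx0
    have d2 : HasDerivAt (fun u => (Real.log u)^2/c - 2*Real.log u/c^2 + 2/c^3)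
        ((2 * Real.log x * x⁻¹)/c - 2*x⁻¹/c^2) x := by
      have e1 : HasDerivAt (fun u => (Real.log u)^2) (2 * Real.log x * x⁻¹) x := by
        simpa using dlog.fun_pow 2
      exact ((e1.div_const c).sub ((dlog.const_mul 2).div_const (c^2))).add_const _
    have := d1.mul d2
    refine this.congr_deriv ?_
    field_simp
    ring
  have h0 : Tendsto F (nhdsWithin 0 (Set.Ioi 0)) (nhds 0) := by
    have tC : Tendsto (fun u : ℝ => u^(n+1) * (2/c^3)) (nhdsWithin 0 (Set.Ioi 0)) (nhds 0) := by
      have := ((continuous_pow (n+1)).tendsto (0:ℝ)).mono_left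
        (nhdsWithin_le_nhds (s := Set.Ioi (0:ℝ)))
      simpa using this.mul_const (2/c^3)
    have h2 := (((tendsto_pow_mul_log_sq n).div_const c).sub
      (((tendsto_pow_mul_log_one n).const_mul 2).div_const (c^2))).add tC
    norm_num at h2
    refine h2.congr (fun u => ?_)
    simp only [hF]
    ring
  have h1 : Tendsto F (nhdsWithin 1 (Set.Iio 1)) (nhds (2/c^3)) := by
    have hcont : ContinuousAt F 1 := by
      refine (continuous_pow (n+1)).continuousAt.mul ?_
      exact (((Real.continuousAt_log one_ne_zero).pow 2).div_const c).sub
        (((Real.continuousAt_log one_ne_zero).const_mul 2).div_const (c^2)) |>.add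
        continuousAt_const
    have := hcont.tendsto.mono_left (nhdsWithin_le_nhds (s := Set.Iio (1:ℝ)))
    simpa [hF] using this
  have := intervalIntegral.integral_eq_sub_of_hasDerivAt_of_tendsto zero_lt_one
    hderiv (intInt_pow_log_sq n) h0 h1
  simpa using this

noncomputable def Zc : ℝ := ∑' n : ℕ, 1/((n:ℝ)+1)^3

lemma summable_Zc : Summable (fun n : ℕ => 1/((n:ℝ)+1)^3) := by
  have h : Summable (fun n : ℕ => 1/(n:ℝ)^3) := by
    rw [Real.summable_one_div_nat_pow]; norm_num
  have := (summable_nat_add_iff 1).2 h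
  refine this.congr (fun n => ?_)
  push_cast; ring_nf

lemma integral_log_sq_div : ∫ u in (0:ℝ)..1, (Real.log u)^2/(1-u) = 2 * Zc := by
  have key : ∑' n : ℕ, (∫ u in Set.Ioo (0:ℝ) 1, u^n * (Real.log u)^2) =
      ∫ u in Set.Ioo (0:ℝ) 1, ∑' n : ℕ, u^n * (Real.log u)^2 := by
    refine MeasureTheory.integral_tsum_of_summable_integral_norm (fun n => ?_) ?_
    · refine ((intInt_pow_log_sq n).1.mono_set Set.Ioo_subset_Ioc_self)
    · refine Summable.congr ((summable_Zc.mul_left 2)) (fun n => ?_)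
      have hval : ∫ u in Set.Ioo (0:ℝ) 1, u^n * (Real.log u)^2 = 2/((n:ℝ)+1)^3 := by
        rw [← MeasureTheory.integral_Ioc_eq_integral_Ioo,
          ← intervalIntegral.integral_of_le zero_le_one]
        exact integral_pow_mul_log_sq n
      rw [show (2:ℝ)*(1/((n:ℝ)+1)^3) = 2/((n:ℝ)+1)^3 by ring, ← hval]
      refine (setIntegral_congr_fun measurableSet_Ioo (fun u hu => ?_)).symm
      rw [Real.norm_eq_abs, abs_of_nonneg (mul_nonneg (pow_nonneg hu.1.le n) (sq_nonneg _))]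
  have lhs : ∑' n : ℕ, (∫ u in Set.Ioo (0:ℝ) 1, u^n * (Real.log u)^2) = 2 * Zc := by
    have : ∀ n : ℕ, (∫ u in Set.Ioo (0:ℝ) 1, u^n * (Real.log u)^2) = 2 * (1/((n:ℝ)+1)^3) := by
      intro n
      rw [← MeasureTheory.integral_Ioc_eq_integral_Ioo,
        ← intervalIntegral.integral_of_le zero_le_one, integral_pow_mul_log_sq n]
      ring
    rw [tsum_congr this, tsum_mul_left]; rfl
  have rhs : (∫ u in Set.Ioo (0:ℝ) 1, ∑' n : ℕ, u^n * (Real.log u)^2) =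
      ∫ u in (0:ℝ)..1, (Real.log u)^2/(1-u) := by
    rw [intervalIntegral.integral_of_le zero_le_one, MeasureTheory.integral_Ioc_eq_integral_Ioo]
    refine setIntegral_congr_fun measurableSet_Ioo (fun u hu => ?_)
    have hgeom : ∑' n : ℕ, u^n = (1-u)⁻¹ :=
      tsum_geometric_of_lt_one hu.1.le hu.2
    rw [tsum_mul_right, hgeom]
    field_simp
  rw [← key, lhs] at rhs
  rw [← rhs]

lemma neg_log_le_div (u : ℝ) (hu : 0 < u) : -Real.log u ≤ (1-u)/u := by
  have := Real.log_le_sub_one_of_pos (inv_pos.2 hu)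
  rw [Real.log_inv] at this
  rw [div_eq_mul_inv]
  have h2 : (1-u) * u⁻¹ = u⁻¹ - 1 := by field_simp
  linarith

lemma one_sub_le_neg_log (u : ℝ) (hu : 0 < u) : 1 - u ≤ -Real.log u := by
  have := Real.log_le_sub_one_of_pos hu; linarith

lemma intInt_log_sq_div : IntervalIntegrable (fun u : ℝ => (Real.log u)^2/(1-u)) volume 0 1 := by
  rw [intervalIntegrable_iff_integrableOn_Ioc_of_le zero_le_one]
  have hmeas : AEStronglyMeasurable (fun u : ℝ => (Real.log u)^2/(1-u))
      (volume.restrict (Set.Ioc (0:ℝ) 1)) :=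
    ((Real.measurable_log.pow_const 2).div (measurable_const.sub measurable_id)).aestronglyMeasurable
  have h1 : IntegrableOn (fun u : ℝ => (Real.log u)^2/(1-u)) (Set.Ioc 0 (1/2)) := by
    refine Integrable.mono' ((integrableOn_log_sq.mono_set
      (Set.Ioc_subset_Ioc_right (by norm_num))).integrable.const_mul 2) (hmeas.mono_set
      (Set.Ioc_subset_Ioc_right (by norm_num))) ?_
    filter_upwards [ae_restrict_mem measurableSet_Ioc] with u hu
    have h2 : (0:ℝ) < 1 - u := by linarith [hu.2]
    rw [Real.norm_eq_abs, abs_of_nonneg (by positivity)]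
    rw [div_le_iff₀ h2] at *
    nlinarith [sq_nonneg (Real.log u), hu.2]
  have h2 : IntegrableOn (fun u : ℝ => (Real.log u)^2/(1-u)) (Set.Ioc (1/2) 1) := by
    refine Integrable.mono' ((integrableOn_const_iff (C := (4:ℝ))).2 (Or.inr measure_Ioc_lt_top))
      (hmeas.mono_set (Set.Ioc_subset_Ioc_left (by norm_num))) ?_
    filter_upwards [ae_restrict_mem measurableSet_Ioc] with u hu
    rw [Real.norm_eq_abs, abs_of_nonneg (div_nonneg (sq_nonneg _) (by linarith [hu.2]))]
    rcases eq_or_lt_of_le hu.2 with h | h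
    · simp [h.symm]
    · have hu0 : (0:ℝ) < u := by linarith [hu.1]
      have h3 : (0:ℝ) < 1 - u := by linarith
      have h4 : -Real.log u ≤ (1-u)/u := neg_log_le_div u hu0
      have h5 : (Real.log u)^2 ≤ ((1-u)/u)^2 := by
        have : (0:ℝ) ≤ -Real.log u := by
          have := Real.log_nonpos hu0.le (by linarith : u ≤ 1); linarith
        nlinarith
      rw [div_le_iff₀ h3]
      have h6 : ((1-u)/u)^2 = (1-u)^2/u^2 := by ring
      have h7 : (1-u)^2/u^2 ≤ (1-u)^2 * 4 := by
        rw [div_le_iff₀ (by positivity)]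
        have h8 : (1:ℝ) ≤ 4*u^2 := by nlinarith [hu.1]
        nlinarith [sq_nonneg (1-u), mul_le_mul_of_nonneg_left h8 (sq_nonneg (1-u))]
      have h9 : (1-u)^2 ≤ (1-u) := by nlinarith
      nlinarith [h5, h6, h7]
  have : Set.Ioc (0:ℝ) 1 = Set.Ioc 0 (1/2) ∪ Set.Ioc (1/2) 1 := by
    rw [Set.Ioc_union_Ioc_eq_Ioc] <;> norm_num
  rw [this]
  exact h1.union h2

lemma neg_log_le_rpow (u : ℝ) (hu : 0 < u) : -Real.log u ≤ 4 * u ^ (-(1/4):ℝ) := by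
  have hr : (0:ℝ) < u ^ (-(1/4):ℝ) := Real.rpow_pos_of_pos hu _
  have hl := Real.log_le_sub_one_of_pos hr
  rw [Real.log_rpow hu] at hl
  nlinarith

noncomputable def hf : ℝ → ℝ := fun u => ((1 - u) * Real.log u)⁻¹
noncomputable def Sf : ℝ → ℝ := fun y => ∫ u in (0:ℝ)..y, hf u

lemma hf_meas : Measurable hf :=
  ((measurable_const.sub measurable_id).mul Real.measurable_log).inv

lemma hf_cont : ∀ x ∈ Set.Ioo (0:ℝ) 1, ContinuousAt hf x := by
  intro x hx
  have hl : Real.log x ≠ 0 := by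
    have := Real.log_neg hx.1 hx.2; linarith
  have hd : (1 - x) * Real.log x ≠ 0 :=
    mul_ne_zero (by linarith [hx.2] : (1:ℝ) - x ≠ 0) hl
  exact (((continuous_const.sub continuous_id).continuousAt).mul
    ((Real.continuousAt_log hx.1.ne'))).inv₀ hd

lemma hf_pos_denom {x : ℝ} (hx : x ∈ Set.Ioo (0:ℝ) 1) :
    0 < (1 - x) * (-Real.log x) := by
  have := Real.log_neg hx.1 hx.2
  have : 0 < -Real.log x := by linarith
  have h2 : 0 < 1 - x := by linarith [hx.2]
  positivity

lemma hf_abs {x : ℝ} (hx : x ∈ Set.Ioo (0:ℝ) 1) :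
    ‖hf x‖ = ((1 - x) * (-Real.log x))⁻¹ := by
  have h := hf_pos_denom hx
  rw [hf, Real.norm_eq_abs, show (1-x) * Real.log x = -((1-x) * (-Real.log x)) by ring,
    inv_neg, abs_neg, abs_of_nonneg (inv_nonneg.2 h.le)]

lemma hf_bound {x y : ℝ} (hy : y ∈ Set.Ioo (0:ℝ) 1) (hx : x ∈ Set.Ioc 0 y) :
    ‖hf x‖ ≤ ((1 - y) * (-Real.log y))⁻¹ := by
  have hx' : x ∈ Set.Ioo (0:ℝ) 1 := ⟨hx.1, lt_of_le_of_lt hx.2 hy.2⟩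
  rw [hf_abs hx']
  have h1 := hf_pos_denom hy
  have h2 := hf_pos_denom hx'
  refine inv_anti₀ h1 ?_
  have hlog : -Real.log y ≤ -Real.log x := by
    have := Real.log_le_log hx.1 hx.2
    linarith
  have hyx : 1 - y ≤ 1 - x := by linarith [hx.2]
  have h3 : 0 < -Real.log x := by have := Real.log_neg hx'.1 hx'.2; linarith
  have h4 : 0 < 1 - y := by linarith [hy.2]
  nlinarith

lemma hf_int {y : ℝ} (hy : y ∈ Set.Ioo (0:ℝ) 1) : IntervalIntegrable hf volume 0 y := by
  rw [intervalIntegrable_iff_integrableOn_Ioc_of_le hy.1.le]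
  refine Integrable.mono' ((integrableOn_const_iff (C := ((1 - y) * (-Real.log y))⁻¹)).2
    (Or.inr measure_Ioc_lt_top)) hf_meas.aestronglyMeasurable ?_
  filter_upwards [ae_restrict_mem measurableSet_Ioc] with x hx
  exact hf_bound hy hx

lemma Sf_deriv : ∀ y ∈ Set.Ioo (0:ℝ) 1, HasDerivAt Sf (hf y) y := fun y hy =>
  intervalIntegral.integral_hasDerivAt_right (hf_int hy)
    (hf_meas.stronglyMeasurable.stronglyMeasurableAtFilter) (hf_cont y hy)

lemma Sf_bound1 {y : ℝ} (hy : y ∈ Set.Ioo (0:ℝ) 1) :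
    ‖Sf y‖ ≤ ((1 - y) * (-Real.log y))⁻¹ * y := by
  have := intervalIntegral.norm_integral_le_of_norm_le_const
    (C := ((1 - y) * (-Real.log y))⁻¹) (f := hf) (a := 0) (b := y) ?_
  · simpa [Sf, abs_of_nonneg hy.1.le] using this
  · intro x hx
    rw [Set.uIoc_of_le hy.1.le] at hx
    exact hf_bound hy hx

lemma Sf_split {y : ℝ} (hy : y ∈ Set.Ioo (1/2 : ℝ) 1) :
    Sf y = Sf (1/2) + ∫ u in (1/2:ℝ)..y, hf u := by
  have h1 : IntervalIntegrable hf volume 0 (1/2) := hf_int (by norm_num)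
  have h2 : IntervalIntegrable hf volume (1/2) y := by
    refine ContinuousOn.intervalIntegrable (fun x hx => ?_)
    rw [Set.uIcc_of_le hy.1.le] at hx
    exact (hf_cont x ⟨by linarith [hx.1], lt_of_le_of_lt hx.2 hy.2⟩).continuousWithinAt
  rw [Sf, ← intervalIntegral.integral_add_adjacent_intervals h1 h2]
  rfl

lemma hf_bound2 {x y : ℝ} (hy : y ∈ Set.Ioo (1/2:ℝ) 1) (hx : x ∈ Set.Ioc (1/2:ℝ) y) :
    ‖hf x‖ ≤ ((1-y)^2)⁻¹ := by
  have hx' : x ∈ Set.Ioo (0:ℝ) 1 := ⟨by linarith [hx.1], lt_of_le_of_lt hx.2 hy.2⟩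
  rw [hf_abs hx']
  have h2 := hf_pos_denom hx'
  have h3 : (0:ℝ) < (1-y)^2 := by nlinarith [hy.2]
  refine inv_anti₀ h3 ?_
  have h4 : 1 - x ≤ -Real.log x := one_sub_le_neg_log x hx'.1
  have h5 : 1 - y ≤ 1 - x := by linarith [hx.2]
  have h6 : (0:ℝ) < 1 - x := by linarith [hx'.2]
  have h7 : (0:ℝ) ≤ 1 - y := by linarith [hy.2]
  nlinarith

lemma Sf_bound2 {y : ℝ} (hy : y ∈ Set.Ioo (1/2 : ℝ) 1) :
    ‖Sf y‖ ≤ ‖Sf (1/2)‖ + ((1-y)^2)⁻¹ := by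
  rw [Sf_split hy]
  refine (norm_add_le _ _).trans ?_
  gcongr
  have := intervalIntegral.norm_integral_le_of_norm_le_const
    (C := ((1-y)^2)⁻¹) (f := hf) (a := 1/2) (b := y) ?_
  · refine this.trans ?_
    rw [abs_of_nonneg (by linarith [hy.1] : (0:ℝ) ≤ y - 1/2)]
    have h3 : (0:ℝ) < (1-y)^2 := by nlinarith [hy.2]
    nlinarith [inv_nonneg.2 h3.le, hy.2, inv_pos.2 h3]
  · intro x hx
    rw [Set.uIoc_of_le hy.1.le] at hx
    exact hf_bound2 hy hx

lemma neg_log_pos {y : ℝ} (hy : y ∈ Set.Ioo (0:ℝ) 1) : 0 < -Real.log y := by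
  have := Real.log_neg hy.1 hy.2; linarith

lemma tendsto_G_zero :
    Tendsto (fun y => Sf y * ((Real.log y)^3/3)) (nhdsWithin 0 (Set.Ioi 0)) (nhds 0) := by
  have hg : Tendsto (fun y : ℝ => (y^(0+1) * (Real.log y)^2) * (3*(1-y))⁻¹)
      (nhdsWithin 0 (Set.Ioi 0)) (nhds 0) := by
    have h2 : Tendsto (fun y : ℝ => (3*(1-y))⁻¹) (nhdsWithin 0 (Set.Ioi 0)) (nhds (3⁻¹)) := by
      have : Tendsto (fun y : ℝ => (3*(1-y))⁻¹) (nhds 0) (nhds ((3*(1-0))⁻¹)) :=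
        ((continuous_const.mul (continuous_const.sub continuous_id)).continuousAt).inv₀ (by norm_num)
      simpa using this.mono_left nhdsWithin_le_nhds
    simpa using (tendsto_pow_mul_log_sq 0).mul h2
  refine squeeze_zero_norm' ?_ hg
  filter_upwards [Ioo_mem_nhdsGT_of_mem (by norm_num : (0:ℝ) ∈ Set.Ico 0 1)] with y hy
  have hL := neg_log_pos hy
  have hD : (0:ℝ) < 1 - y := by linarith [hy.2]
  have hb := Sf_bound1 hy
  have e1 : ‖Sf y * ((Real.log y)^3/3)‖ = ‖Sf y‖ * ((-Real.log y)^3/3) := by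
    rw [norm_mul]
    congr 1
    rw [Real.norm_eq_abs, abs_div, abs_of_pos (by norm_num : (0:ℝ) < 3),
      show (Real.log y)^3 = -((-Real.log y)^3) by ring, abs_neg,
      abs_of_pos (by positivity : (0:ℝ) < (-Real.log y)^3)]
  rw [e1]
  have e2 : ((1 - y) * (-Real.log y))⁻¹ * y * ((-Real.log y)^3/3)
      = (y^(0+1) * (Real.log y)^2) * (3*(1-y))⁻¹ := by
    have hDne : (1:ℝ) - y ≠ 0 := hD.ne'
    have hLne : Real.log y ≠ 0 := ne_of_lt (by linarith)
    field_simp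
    ring
  calc ‖Sf y‖ * ((-Real.log y)^3/3)
      ≤ ((1 - y) * (-Real.log y))⁻¹ * y * ((-Real.log y)^3/3) := by
        have : (0:ℝ) ≤ (-Real.log y)^3/3 := by positivity
        exact mul_le_mul_of_nonneg_right hb this
    _ = (y^(0+1) * (Real.log y)^2) * (3*(1-y))⁻¹ := e2

lemma tendsto_G_one :
    Tendsto (fun y => Sf y * ((Real.log y)^3/3)) (nhdsWithin 1 (Set.Iio 1)) (nhds 0) := by
  set C := ‖Sf (1/2)‖ with hC
  have hg : Tendsto (fun y : ℝ => (C + ((1-y)^2)⁻¹) * (8*(1-y)^3/3))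
      (nhdsWithin 1 (Set.Iio 1)) (nhds 0) := by
    have : Tendsto (fun y : ℝ => (8/3) * C * (1-y)^3 + (8/3)*(1-y))
        (nhdsWithin 1 (Set.Iio 1)) (nhds 0) := by
      have hc : Continuous (fun y : ℝ => (8/3) * C * (1-y)^3 + (8/3)*(1-y)) := by continuity
      have := (hc.tendsto 1).mono_left (nhdsWithin_le_nhds (s := Set.Iio (1:ℝ)))
      simpa using this
    refine this.congr' ?_
    filter_upwards [Ioo_mem_nhdsLT_of_mem (by norm_num : (1:ℝ) ∈ Set.Ioc (1/2) 1)] with y hy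
    have hD : (0:ℝ) < 1 - y := by linarith [hy.2]
    field_simp
  refine squeeze_zero_norm' ?_ hg
  filter_upwards [Ioo_mem_nhdsLT_of_mem (by norm_num : (1:ℝ) ∈ Set.Ioc (1/2) 1)] with y hy
  have hy' : y ∈ Set.Ioo (0:ℝ) 1 := ⟨by linarith [hy.1], hy.2⟩
  have hL := neg_log_pos hy'
  have hD : (0:ℝ) < 1 - y := by linarith [hy.2]
  have hb := Sf_bound2 hy
  have hLD : -Real.log y ≤ 2*(1-y) := by
    have h1 := neg_log_le_div y hy'.1
    have h2 : (1-y)/y ≤ 2*(1-y) := by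
      rw [div_le_iff₀ hy'.1]
      nlinarith [hy.1]
    linarith
  have e1 : ‖Sf y * ((Real.log y)^3/3)‖ = ‖Sf y‖ * ((-Real.log y)^3/3) := by
    rw [norm_mul]
    congr 1
    rw [Real.norm_eq_abs, abs_div, abs_of_pos (by norm_num : (0:ℝ) < 3),
      show (Real.log y)^3 = -((-Real.log y)^3) by ring, abs_neg,
      abs_of_pos (by positivity : (0:ℝ) < (-Real.log y)^3)]
  rw [e1]
  have h8 : (-Real.log y)^3/3 ≤ 8*(1-y)^3/3 := by
    have : (-Real.log y)^3 ≤ (2*(1-y))^3 := by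
      exact pow_le_pow_left₀ hL.le hLD 3
    nlinarith
  have hC0 : (0:ℝ) ≤ C + ((1-y)^2)⁻¹ := by positivity
  calc ‖Sf y‖ * ((-Real.log y)^3/3)
      ≤ (C + ((1-y)^2)⁻¹) * ((-Real.log y)^3/3) :=
        mul_le_mul_of_nonneg_right hb (by positivity)
    _ ≤ (C + ((1-y)^2)⁻¹) * (8*(1-y)^3/3) := mul_le_mul_of_nonneg_left h8 hC0

lemma Sf_contOn : ∀ y ∈ Set.Ioo (0:ℝ) 1, ContinuousAt (fun y => Sf y * ((Real.log y)^2/y)) y := by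
  intro y hy
  exact ((Sf_deriv y hy).continuousAt).mul
    (((Real.continuousAt_log hy.1.ne').pow 2).div continuousAt_id hy.1.ne')

lemma P2_bound_left {y : ℝ} (hy : y ∈ Set.Ioo (0:ℝ) 1) :
    ‖Sf y * ((Real.log y)^2/y)‖ ≤ (-Real.log y)/(1-y) := by
  have hL := neg_log_pos hy
  have hD : (0:ℝ) < 1 - y := by linarith [hy.2]
  have hb := Sf_bound1 hy
  rw [norm_mul]
  have e2 : ‖(Real.log y)^2/y‖ = (Real.log y)^2/y := by
    rw [Real.norm_eq_abs, abs_of_nonneg (div_nonneg (sq_nonneg _) hy.1.le)]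
  rw [e2]
  have step : ‖Sf y‖ * ((Real.log y)^2/y) ≤ (((1 - y) * (-Real.log y))⁻¹ * y) * ((Real.log y)^2/y) :=
    mul_le_mul_of_nonneg_right hb (div_nonneg (sq_nonneg _) hy.1.le)
  refine step.trans (le_of_eq ?_)
  have c1 : y * ((Real.log y)^2/y) = (Real.log y)^2 := by
    rw [mul_comm, div_mul_eq_mul_div, mul_div_assoc, div_self hy.1.ne', mul_one]
  rw [mul_assoc, c1, mul_inv, show (Real.log y)^2 = (-Real.log y)*(-Real.log y) by ring,
    div_eq_mul_inv]
  calc (1-y)⁻¹ * (-Real.log y)⁻¹ * (-Real.log y * -Real.log y)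
      = (1-y)⁻¹ * (((-Real.log y)⁻¹ * (-Real.log y)) * (-Real.log y)) := by ring
    _ = -Real.log y * (1-y)⁻¹ := by rw [inv_mul_cancel₀ (ne_of_gt hL)]; ring

lemma P2_int : IntervalIntegrable (fun y => Sf y * ((Real.log y)^2/y)) volume 0 1 := by
  rw [intervalIntegrable_iff_integrableOn_Ioc_of_le zero_le_one]
  have hsplit : Set.Ioc (0:ℝ) 1 = Set.Ioc 0 (1/2) ∪ Set.Ioc (1/2) 1 := by
    rw [Set.Ioc_union_Ioc_eq_Ioc] <;> norm_num
  rw [hsplit]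
  refine IntegrableOn.union ?_ ?_
  · -- on (0, 1/2]
    have hmeas : AEStronglyMeasurable (fun y => Sf y * ((Real.log y)^2/y))
        (volume.restrict (Set.Ioc (0:ℝ) (1/2))) := by
      refine ContinuousOn.aestronglyMeasurable (fun y hy => ?_) measurableSet_Ioc
      exact (Sf_contOn y ⟨hy.1, by linarith [hy.2]⟩).continuousWithinAt
    have hg : IntegrableOn (fun y : ℝ => 8 * y ^ (-(1/4):ℝ)) (Set.Ioc 0 (1/2)) := by
      have := (intervalIntegral.intervalIntegrable_rpow' (a := 0) (b := 1/2)
        (r := (-(1/4):ℝ)) (by norm_num)).1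
      exact this.const_mul 8
    refine hg.integrable.mono' hmeas ?_
    filter_upwards [ae_restrict_mem measurableSet_Ioc] with y hy
    have hy' : y ∈ Set.Ioo (0:ℝ) 1 := ⟨hy.1, by linarith [hy.2]⟩
    refine (P2_bound_left hy').trans ?_
    have hL := neg_log_pos hy'
    have hD2 : (1:ℝ)/2 ≤ 1 - y := by linarith [hy.2]
    have h1 : (-Real.log y)/(1-y) ≤ 2 * (-Real.log y) := by
      rw [div_le_iff₀ (by linarith)]
      nlinarith
    have h2 := neg_log_le_rpow y hy.1
    linarith
  · -- on (1/2, 1]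
    rw [integrableOn_Ioc_iff_integrableOn_Ioo]
    have hmeas : AEStronglyMeasurable (fun y => Sf y * ((Real.log y)^2/y))
        (volume.restrict (Set.Ioo (1/2:ℝ) 1)) := by
      refine ContinuousOn.aestronglyMeasurable (fun y hy => ?_) measurableSet_Ioo
      exact (Sf_contOn y ⟨by linarith [hy.1], hy.2⟩).continuousWithinAt
    refine Integrable.mono' ((integrableOn_const_iff (C := 8*‖Sf (1/2)‖ + 8)).2
      (Or.inr measure_Ioo_lt_top)) hmeas ?_
    filter_upwards [ae_restrict_mem measurableSet_Ioo] with y hy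
    have hy' : y ∈ Set.Ioo (0:ℝ) 1 := ⟨by linarith [hy.1], hy.2⟩
    have hL := neg_log_pos hy'
    have hD : (0:ℝ) < 1 - y := by linarith [hy.2]
    have hb := Sf_bound2 hy
    have hLD : -Real.log y ≤ 2*(1-y) := by
      have h1 := neg_log_le_div y hy'.1
      have h2 : (1-y)/y ≤ 2*(1-y) := by
        rw [div_le_iff₀ hy'.1]
        nlinarith [hy.1]
      linarith
    rw [norm_mul]
    have e2 : ‖(Real.log y)^2/y‖ = (Real.log y)^2/y := by
      rw [Real.norm_eq_abs, abs_of_nonneg (div_nonneg (sq_nonneg _) hy'.1.le)]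
    rw [e2]
    have h3 : (Real.log y)^2/y ≤ 8*(1-y)^2 := by
      have hsq : (Real.log y)^2 ≤ 4*(1-y)^2 := by nlinarith
      rw [div_le_iff₀ hy'.1]
      nlinarith [hy.1, sq_nonneg (1-y)]
    have h4 : ‖Sf y‖ * ((Real.log y)^2/y) ≤ (‖Sf (1/2)‖ + ((1-y)^2)⁻¹) * (8*(1-y)^2) := by
      refine mul_le_mul hb h3 (div_nonneg (sq_nonneg _) hy'.1.le) (by positivity)
    refine h4.trans ?_
    have h5 : ((1-y)^2)⁻¹ * (1-y)^2 = 1 := by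
      rw [inv_mul_cancel₀ (by positivity)]
    have h6 : (1-y)^2 ≤ 1 := by nlinarith [hy.1, hy.2]
    nlinarith [norm_nonneg (Sf (1/2)), sq_nonneg (1-y), inv_pos.2 (show (0:ℝ) < (1-y)^2 by positivity)]

lemma hf_cube (y : ℝ) : hf y * ((Real.log y)^3/3) = (1/3) * ((Real.log y)^2/(1-y)) := by
  by_cases hL : Real.log y = 0
  · simp [hf, hL]
  by_cases hD : (1:ℝ) - y = 0
  · have : y = 1 := by linarith
    subst this
    simp at hL
  rw [hf]
  field_simp

lemma P1_int : IntervalIntegrable (fun y => hf y * ((Real.log y)^3/3)) volume 0 1 := by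
  have e : (fun y => hf y * ((Real.log y)^3/3))
      = fun y => (1/3) * ((Real.log y)^2/(1-y)) := funext hf_cube
  rw [e]
  exact intInt_log_sq_div.const_mul (1/3)

lemma integral_P2 : ∫ y in (0:ℝ)..1, Sf y * ((Real.log y)^2/y) = -(2/3) * Zc := by
  have hderiv : ∀ y ∈ Set.Ioo (0:ℝ) 1, HasDerivAt (fun y => Sf y * ((Real.log y)^3/3))
      (hf y * ((Real.log y)^3/3) + Sf y * ((Real.log y)^2/y)) y := by
    intro y hy
    have h2 : HasDerivAt (fun y => (Real.log y)^3/3) ((Real.log y)^2/y) y := by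
      have := ((Real.hasDerivAt_log hy.1.ne').fun_pow 3).div_const 3
      refine this.congr_deriv ?_
      field_simp
      ring
    exact (Sf_deriv y hy).mul h2
  have h0 := intervalIntegral.integral_eq_sub_of_hasDerivAt_of_tendsto zero_lt_one
    hderiv (P1_int.add P2_int) tendsto_G_zero tendsto_G_one
  rw [intervalIntegral.integral_add P1_int P2_int] at h0
  have hP1 : ∫ y in (0:ℝ)..1, hf y * ((Real.log y)^3/3) = (2/3) * Zc := by
    have e : (fun y => hf y * ((Real.log y)^3/3))
        = fun y => (1/3) * ((Real.log y)^2/(1-y)) := funext hf_cube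
    rw [e, intervalIntegral.integral_const_mul, integral_log_sq_div]
    ring
  rw [hP1] at h0
  linarith

end ZetaThreeAux

lemma inner_eq {y : ℝ} (hy : y ∈ Set.Ioc (0:ℝ) 1) :
    ∫ x in (0:ℝ)..1, (Real.log y)^2 / ((1 - x*y) * Real.log (x*y))
      = Sf y * ((Real.log y)^2/y) := by
  have h := intervalIntegral.integral_comp_mul_right (a := (0:ℝ)) (b := 1)
    (fun u => (Real.log y)^2 * hf u) hy.1.ne'
  have e1 : (fun x => (Real.log y)^2 / ((1 - x*y) * Real.log (x*y)))
      = fun x => (fun u => (Real.log y)^2 * hf u) (x*y) := by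
    funext x
    simp [hf, div_eq_mul_inv]
  rw [e1, h]
  rw [zero_mul, one_mul, intervalIntegral.integral_const_mul]
  rw [smul_eq_mul]
  have : (∫ u in (0:ℝ)..y, hf u) = Sf y := rfl
  rw [this]
  ring

lemma outer_eq :
    (∫ y in (0:ℝ)..1, ∫ x in (0:ℝ)..1, (Real.log y)^2 / ((1 - x*y) * Real.log (x*y)))
      = -(2/3) * Zc := by
  rw [← integral_P2]
  rw [intervalIntegral.integral_of_le zero_le_one, intervalIntegral.integral_of_le zero_le_one]
  exact setIntegral_congr_fun measurableSet_Ioc (fun y hy => inner_eq hy)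

theorem zeta_three_double_integral :
    riemannZeta 3 =
      ((-3 / 2 : ℝ) * ∫ y in (0:ℝ)..1, ∫ x in (0:ℝ)..1,
          (Real.log y) ^ 2 / ((1 - x * y) * Real.log (x * y)) : ℝ) := by
  rw [outer_eq]
  have e1 : (-3/2 : ℝ) * (-(2/3) * Zc) = Zc := by ring
  rw [e1]
  have h3 : riemannZeta 3 = ∑' n : ℕ, 1 / (n:ℂ)^3 := by
    have := zeta_nat_eq_tsum_of_gt_one (k := 3) (by norm_num)
    simpa using this
  rw [h3]
  have hsum : Summable (fun n : ℕ => 1/(n:ℝ)^3) := by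
    rw [Real.summable_one_div_nat_pow]; norm_num
  have h4 : ∑' n : ℕ, 1/(n:ℝ)^3 = Zc := by
    rw [Summable.tsum_eq_zero_add hsum]
    norm_num [Zc]
  rw [← h4, Complex.ofReal_tsum]
  push_cast
  rfl
end

section
/- For real s > 0, the digamma function satisfies ψ(s) = ∫_0^1 ∫_0^1 ((xy)^{s−1} − y)/((1−xy)·log(xy)) dx dy. -/
open MeasureTheory Real

open Set Filter Topology intervalIntegral

namespace DG

noncomputable def h (t : ℝ) : ℝ := 1/(1-t) + 1/Real.log t

lemma log_neg' {t : ℝ} (ht : t ∈ Ioo (0:ℝ) 1) : Real.log t < 0 :=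
  Real.log_neg ht.1 ht.2

lemma h_nonneg {t : ℝ} (ht : t ∈ Ioo (0:ℝ) 1) : 0 ≤ h t := by
  obtain ⟨h0, h1⟩ := ht
  have hl : Real.log t < 0 := Real.log_neg h0 h1
  have h1t : (0:ℝ) < 1 - t := by linarith
  have hle : 1 - t ≤ -Real.log t := by
    have := Real.log_le_sub_one_of_pos h0
    linarith
  have : 1/(-Real.log t) ≤ 1/(1-t) := by
    apply one_div_le_one_div_of_le h1t hle
  have hrw : 1/Real.log t = -(1/(-Real.log t)) := by
    field_simp
  rw [h, hrw]
  linarith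

lemma h_le_one {t : ℝ} (ht : t ∈ Ioo (0:ℝ) 1) : h t ≤ 1 := by
  obtain ⟨h0, h1⟩ := ht
  have hl : Real.log t < 0 := Real.log_neg h0 h1
  have h1t : (0:ℝ) < 1 - t := by linarith
  -- key : t * (-log t) ≤ 1 - t
  have key : t * (-Real.log t) ≤ 1 - t := by
    have h2 : 1 - t⁻¹ ≤ Real.log t := Real.one_sub_inv_le_log_of_pos h0
    have h3 : -Real.log t ≤ t⁻¹ - 1 := by linarith
    have h4 : t * (-Real.log t) ≤ t * (t⁻¹ - 1) := by
      apply mul_le_mul_of_nonneg_left h3 h0.le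
    have h5 : t * (t⁻¹ - 1) = 1 - t := by
      field_simp
    linarith
  -- goal: 1/(1-t) + 1/log t ≤ 1
  rw [h, div_add_div _ _ (by linarith : (1:ℝ) - t ≠ 0) (ne_of_lt hl)]
  rw [div_le_one_iff]
  right; right
  constructor
  · nlinarith
  · nlinarith


lemma abs_one_sub_rpow {p t : ℝ} (hp : -1 < p) (ht : t ∈ Ioo (0:ℝ) 1) :
    |1 - t ^ p| ≤ (1 + |p|) * (1 + t ^ p) * (1 - t) := by
  obtain ⟨h0, h1⟩ := ht
  have htp : (0:ℝ) < t ^ p := Real.rpow_pos_of_pos h0 p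
  have h1t : (0:ℝ) < 1 - t := by linarith
  rcases le_or_gt 0 p with hp0 | hp0
  · -- p ≥ 0 : t^p ≤ 1
    have hle : t ^ p ≤ 1 := Real.rpow_le_one h0.le h1.le hp0
    rw [abs_of_nonneg (by linarith)]
    rcases le_or_gt 1 p with hp1 | hp1
    · -- Bernoulli : 1 + p * (t - 1) ≤ t ^ p
      have hb : 1 + p * (t - 1) ≤ (1 + (t - 1)) ^ p :=
        one_add_mul_self_le_rpow_one_add (by linarith) hp1
      rw [show (1 : ℝ) + (t - 1) = t by ring] at hb
      have : 1 - t ^ p ≤ p * (1 - t) := by nlinarith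
      have h2 : p * (1 - t) ≤ (1 + |p|) * (1 + t ^ p) * (1 - t) := by
        rw [abs_of_nonneg hp0]
        nlinarith
      linarith
    · -- 0 ≤ p ≤ 1 : t ≤ t^p
      have : t = t ^ (1:ℝ) := (Real.rpow_one t).symm
      have hle2 : t ^ (1:ℝ) ≤ t ^ p :=
        Real.rpow_le_rpow_of_exponent_ge h0 h1.le (by linarith)
      rw [Real.rpow_one] at hle2
      have h2 : 1 - t ^ p ≤ 1 - t := by linarith
      nlinarith [abs_nonneg p, mul_nonneg (abs_nonneg p) htp.le,
        mul_nonneg h1t.le htp.le, mul_nonneg h1t.le (abs_nonneg p),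
        mul_nonneg (mul_nonneg h1t.le (abs_nonneg p)) htp.le]
  · -- -1 < p < 0 : t^p ≥ 1
    have hge : 1 ≤ t ^ p := by
      have := Real.rpow_le_rpow_of_exponent_ge h0 h1.le (hp0.le : p ≤ (0:ℝ))
      simpa using this
    · rw [abs_of_nonpos (by linarith)]
      -- t^p - 1 = t^p * (1 - t^(-p)) ≤ t^p * (1 - t)
      have hq : (0:ℝ) ≤ -p := by linarith
      have hq1 : -p ≤ 1 := by linarith
      have hle2 : t ≤ t ^ (-p) := by
        have := Real.rpow_le_rpow_of_exponent_ge h0 h1.le hq1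
        rwa [Real.rpow_one] at this
      have hmul : t ^ p * t ^ (-p) = 1 := by
        rw [← Real.rpow_add h0]; simp
      have : t ^ p - 1 = t ^ p * (1 - t ^ (-p)) := by
        rw [mul_sub, hmul, mul_one]
      rw [neg_sub, this]
      have h3 : 1 - t ^ (-p) ≤ 1 - t := by linarith
      have h4 : t ^ p * (1 - t ^ (-p)) ≤ t ^ p * (1 - t) :=
        mul_le_mul_of_nonneg_left h3 htp.le
      have h5 : t ^ p * (1 - t) ≤ (1 + |p|) * (1 + t ^ p) * (1 - t) := by
        nlinarith [abs_nonneg p]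
      linarith


lemma integrableOn_rpow01 {p : ℝ} (hp : -1 < p) :
    IntegrableOn (fun u : ℝ => u ^ p) (Ioo 0 1) volume := by
  have := (intervalIntegrable_rpow' hp (a := 0) (b := 1))
  rw [intervalIntegrable_iff_integrableOn_Ioo_of_le (by norm_num)] at this
  exact this

lemma integral_rpow01 {p : ℝ} (hp : -1 < p) :
    ∫ u in Ioo (0:ℝ) 1, u ^ p = 1/(p+1) := by
  rw [← integral_Ioc_eq_integral_Ioo, ← intervalIntegral.integral_of_le (by norm_num : (0:ℝ) ≤ 1)]
  rw [integral_rpow (Or.inl hp)]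
  rw [Real.one_rpow, Real.zero_rpow (by linarith)]
  norm_num

lemma measurable_q (p : ℝ) : Measurable (fun u : ℝ => (u ^ p - 1)/Real.log u) := by
  measurability

lemma integrableOn_q {p : ℝ} (hp : -1 < p) :
    IntegrableOn (fun u : ℝ => (u ^ p - 1)/Real.log u) (Ioo 0 1) volume := by
  have hbound : IntegrableOn (fun u : ℝ => (1 + |p|) * (1 + u ^ p)) (Ioo 0 1) volume := by
    apply Integrable.const_mul
    exact (integrable_const 1).add (integrableOn_rpow01 hp)
  apply Integrable.mono' hbound ((measurable_q p).aestronglyMeasurable)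
  filter_upwards [ae_restrict_mem measurableSet_Ioo] with u hu
  obtain ⟨h0, h1⟩ := hu
  have hl : Real.log u < 0 := Real.log_neg h0 h1
  have hlog : 1 - u ≤ -Real.log u := by
    have := Real.log_le_sub_one_of_pos h0; linarith
  have h1u : (0:ℝ) < 1 - u := by linarith
  rw [Real.norm_eq_abs, abs_div]
  have habs : |Real.log u| = -Real.log u := abs_of_neg hl
  rw [habs]
  rw [div_le_iff₀ (by linarith)]
  have h2 : |u ^ p - 1| ≤ (1 + |p|) * (1 + u ^ p) * (1 - u) := by
    rw [abs_sub_comm]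
    exact abs_one_sub_rpow hp ⟨h0, h1⟩
  calc |u ^ p - 1| ≤ (1 + |p|) * (1 + u ^ p) * (1 - u) := h2
    _ ≤ (1 + |p|) * (1 + u ^ p) * -Real.log u := by
        apply mul_le_mul_of_nonneg_left hlog
        have := Real.rpow_pos_of_pos h0 p
        have := abs_nonneg p
        nlinarith

lemma hasDerivAt_q {u : ℝ} (hu : u ∈ Ioo (0:ℝ) 1) (x : ℝ) :
    HasDerivAt (fun x' : ℝ => (u ^ x' - 1)/Real.log u) (u ^ x) x := by
  obtain ⟨h0, h1⟩ := hu
  have hl : Real.log u < 0 := Real.log_neg h0 h1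
  have hd : HasDerivAt (fun x' : ℝ => Real.exp (Real.log u * x'))
      (Real.exp (Real.log u * x) * Real.log u) x := by
    have h1' : HasDerivAt (fun x' : ℝ => Real.log u * x') (Real.log u) x := by
      simpa using (hasDerivAt_id x).const_mul (Real.log u)
    simpa [mul_comm] using h1'.exp
  have heq : ∀ x' : ℝ, (u ^ x' - 1)/Real.log u
      = (Real.exp (Real.log u * x') - 1) * (Real.log u)⁻¹ := by
    intro x'
    rw [Real.rpow_def_of_pos h0, div_eq_mul_inv]
  have := ((hd.sub_const 1).mul_const (Real.log u)⁻¹)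
  have h2 : Real.exp (Real.log u * x) * Real.log u * (Real.log u)⁻¹ = u ^ x := by
    rw [mul_assoc, mul_inv_cancel₀ (ne_of_lt hl), mul_one, Real.rpow_def_of_pos h0]
  rw [h2] at this
  exact this.congr_of_eventuallyEq (by filter_upwards with x' using heq x')

lemma hasDerivAt_Fq {x : ℝ} (hx : -1 < x) :
    HasDerivAt (fun x' : ℝ => ∫ u in Ioo (0:ℝ) 1, (u ^ x' - 1)/Real.log u)
      (1/(x+1)) x := by
  have hx2 : (-1:ℝ) < (x-1)/2 := by linarith
  have key := _root_.hasDerivAt_integral_of_dominated_loc_of_deriv_le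
    (F := fun x' (u : ℝ) => (u ^ x' - 1)/Real.log u)
    (F' := fun x' (u : ℝ) => u ^ x')
    (x₀ := x) (s := Metric.ball x ((x+1)/2))
    (μ := volume.restrict (Ioo (0:ℝ) 1))
    (bound := fun u => u ^ ((x-1)/2))
    (Metric.ball_mem_nhds x (by linarith))
    (by filter_upwards with x' using (measurable_q x').aestronglyMeasurable)
    (integrableOn_q hx)
    ((by measurability : Measurable (fun u : ℝ => u ^ x)).aestronglyMeasurable)
    ?_ (integrableOn_rpow01 hx2) ?_
  · have : (∫ u in Ioo (0:ℝ) 1, u ^ x) = 1/(x+1) := integral_rpow01 hx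
    rw [this] at key
    exact key.2
  · filter_upwards [ae_restrict_mem measurableSet_Ioo] with u hu x' hx'
    obtain ⟨h0, h1⟩ := hu
    rw [Real.norm_eq_abs, abs_of_pos (Real.rpow_pos_of_pos h0 x')]
    apply Real.rpow_le_rpow_of_exponent_ge h0 h1.le
    rw [Metric.mem_ball, Real.dist_eq, abs_lt] at hx'
    linarith
  · filter_upwards [ae_restrict_mem measurableSet_Ioo] with u hu x' _
    exact hasDerivAt_q hu x'

lemma integral_q {p : ℝ} (hp : -1 < p) :
    ∫ u in Ioo (0:ℝ) 1, (u ^ p - 1)/Real.log u = Real.log (p+1) := by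
  have hFTC := intervalIntegral.integral_eq_sub_of_hasDerivAt
    (f := fun x' : ℝ => ∫ u in Ioo (0:ℝ) 1, (u ^ x' - 1)/Real.log u)
    (f' := fun x : ℝ => 1/(x+1)) (a := 0) (b := p)
    ?_ ?_
  · have h0 : (∫ u in Ioo (0:ℝ) 1, (u ^ (0:ℝ) - 1)/Real.log u) = 0 := by
      apply integral_eq_zero_of_ae
      filter_upwards with u
      simp [Real.rpow_zero]
    rw [h0, sub_zero] at hFTC
    have hint : ∫ x in (0:ℝ)..p, 1/(x+1) = Real.log (p+1) := by
      have := intervalIntegral.integral_comp_add_right (a := 0) (b := p)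
        (fun x : ℝ => 1/x) 1
      rw [this, zero_add]
      rw [integral_one_div]
      · norm_num
      · intro hmem
        rw [Set.uIcc_eq_union] at hmem
        rcases hmem with hm | hm
        · rcases hm with ⟨ha, hb⟩; linarith
        · rcases hm with ⟨ha, hb⟩; linarith
    rw [hint] at hFTC
    exact hFTC.symm
  · intro x hx
    apply hasDerivAt_Fq
    rcases Set.mem_uIcc.mp hx with ⟨ha, _⟩ | ⟨ha, _⟩ <;> linarith
  · apply ContinuousOn.intervalIntegrable
    apply ContinuousOn.div continuousOn_const
    · fun_prop
    · intro x hx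
      rcases Set.mem_uIcc.mp hx with ⟨ha, _⟩ | ⟨ha, _⟩ <;> intro hc <;> linarith

lemma diffGamma {x : ℝ} (hx : 0 < x) : DifferentiableAt ℝ Real.Gamma x :=
  Real.differentiableAt_Gamma fun m =>
    ne_of_gt (lt_of_le_of_lt (neg_nonpos.mpr (Nat.cast_nonneg m)) hx)

lemma diff_logGamma {x : ℝ} (hx : 0 < x) :
    DifferentiableAt ℝ (Real.log ∘ Real.Gamma) x :=
  (diffGamma hx).log (Real.Gamma_pos_of_pos hx).ne'

lemma logGamma_rec {x : ℝ} (hx : 0 < x) :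
    (Real.log ∘ Real.Gamma) (x + 1) = (Real.log ∘ Real.Gamma) x + Real.log x := by
  simp only [Function.comp_apply, Real.Gamma_add_one hx.ne',
    Real.log_mul hx.ne' (Real.Gamma_pos_of_pos hx).ne', add_comm]

lemma psi_eq {x : ℝ} (hx : 0 < x) :
    deriv (Real.log ∘ Real.Gamma) x = deriv Real.Gamma x / Real.Gamma x := by
  rw [Function.comp_def, deriv.log (diffGamma hx) (Real.Gamma_pos_of_pos hx).ne']

lemma psi_rec {x : ℝ} (hx : 0 < x) :
    deriv (Real.log ∘ Real.Gamma) (x + 1) = deriv (Real.log ∘ Real.Gamma) x + 1 / x := by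
  rw [← deriv_comp_add_const, one_div, ← Real.deriv_log,
    ← deriv_add (diff_logGamma hx) (Real.differentiableAt_log hx.ne')]
  apply Filter.EventuallyEq.deriv_eq
  filter_upwards [eventually_gt_nhds hx] using fun y hy => logGamma_rec hy

lemma psi_sum (s : ℝ) (hs : 0 < s) (n : ℕ) :
    deriv (Real.log ∘ Real.Gamma) (s + n)
      = deriv (Real.log ∘ Real.Gamma) s + ∑ k ∈ Finset.range n, 1 / (s + k) := by
  induction n with
  | zero => simp
  | succ n ih =>
    have h1 : s + (n + 1 : ℕ) = (s + n) + 1 := by push_cast; ring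
    rw [h1, psi_rec (by positivity), ih, Finset.sum_range_succ]
    ring

lemma psi_lb {x : ℝ} (hx : 0 < x) :
    Real.log x ≤ deriv (Real.log ∘ Real.Gamma) (x + 1) := by
  have hc : ConvexOn ℝ (Set.Ioi 0) (Real.log ∘ Real.Gamma) := Real.convexOn_log_Gamma
  refine (le_of_eq ?_).trans <| hc.slope_le_deriv (Set.mem_Ioi.mpr hx)
    (Set.mem_Ioi.mpr (by linarith)) (by linarith) (diff_logGamma (by linarith))
  rw [slope_def_field, show x + 1 - x = (1:ℝ) by ring, div_one, logGamma_rec hx,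
    add_sub_cancel_left]

lemma psi_ub {x : ℝ} (hx : 0 < x) :
    deriv (Real.log ∘ Real.Gamma) (x + 1) ≤ Real.log (x + 1) := by
  have hc : ConvexOn ℝ (Set.Ioi 0) (Real.log ∘ Real.Gamma) := Real.convexOn_log_Gamma
  refine (hc.deriv_le_slope (Set.mem_Ioi.mpr (by linarith : (0:ℝ) < x + 1))
    (Set.mem_Ioi.mpr (by linarith : (0:ℝ) < x + 2)) (by linarith)
    (diff_logGamma (by linarith))).trans (le_of_eq ?_)
  rw [slope_def_field, show x + 2 - (x + 1) = (1:ℝ) by ring, div_one,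
    show x + 2 = (x + 1) + (1:ℝ) by ring, logGamma_rec (by linarith : (0:ℝ) < x + 1),
    add_sub_cancel_left]

lemma tendsto_psi (s : ℝ) (hs : 0 < s) :
    Filter.Tendsto (fun n : ℕ => Real.log (s + n) - ∑ k ∈ Finset.range n, 1 / (s + k))
      Filter.atTop (𝓝 (deriv Real.Gamma s / Real.Gamma s)) := by
  set f := Real.log ∘ Real.Gamma with hf
  have key : ∀ n : ℕ, Real.log (s + n) - ∑ k ∈ Finset.range n, 1 / (s + k)
      = deriv f s + (Real.log (s + n) - deriv f (s + n)) := by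
    intro n
    rw [psi_sum s hs n]
    ring
  have he : Filter.Tendsto (fun n : ℕ => Real.log (s + n) - deriv f (s + n))
      Filter.atTop (𝓝 0) := by
    have hb : Filter.Tendsto (fun n : ℕ => 1 / (s + n - 1)) Filter.atTop (𝓝 0) := by
      have h1 : Filter.Tendsto (fun n : ℕ => s + (n:ℝ) - 1) Filter.atTop Filter.atTop := by
        apply Filter.tendsto_atTop_add_const_right
        exact Filter.tendsto_atTop_add_const_left _ s tendsto_natCast_atTop_atTop
      simpa [one_div, Function.comp_def] using tendsto_inv_atTop_zero.comp h1
    apply tendsto_of_tendsto_of_tendsto_of_le_of_le' tendsto_const_nhds hb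
    · filter_upwards [Filter.eventually_ge_atTop 1] with n hn
      have hx : (0:ℝ) < s + n - 1 := by
        have : (1:ℝ) ≤ n := by exact_mod_cast hn
        linarith
      have := psi_ub hx
      rw [show s + n - 1 + 1 = s + n by ring] at this
      linarith
    · filter_upwards [Filter.eventually_ge_atTop 1] with n hn
      have hx : (0:ℝ) < s + n - 1 := by
        have : (1:ℝ) ≤ n := by exact_mod_cast hn
        linarith
      have hlb := psi_lb hx
      rw [show s + n - 1 + 1 = s + n by ring] at hlb
      have hlog : Real.log (s + n) - Real.log (s + n - 1) ≤ 1 / (s + n - 1) := by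
        rw [← Real.log_div (by linarith) (ne_of_gt hx)]
        have h2 := Real.log_le_sub_one_of_pos
          (show (0:ℝ) < (s + n) / (s + n - 1) by positivity)
        have h3 : (s + n) / (s + n - 1) - 1 = 1 / (s + n - 1) := by
          field_simp
          ring
        linarith
      linarith
  have := Filter.Tendsto.const_add (deriv f s) he
  rw [add_zero] at this
  have heq : deriv f s = deriv Real.Gamma s / Real.Gamma s := psi_eq hs
  rw [← heq]
  apply this.congr'
  filter_upwards with n
  rw [key n]

lemma measurable_h : Measurable h := by
  unfold h
  apply Measurable.add
  · exact (measurable_const.sub measurable_id).const_div 1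
  · exact Real.measurable_log.const_div 1

lemma integrableOn_rpow_mul_h {p : ℝ} (hp : -1 < p) :
    IntegrableOn (fun u : ℝ => u ^ p * h u) (Ioo 0 1) volume := by
  apply Integrable.mono' (integrableOn_rpow01 hp)
  · exact ((by measurability : Measurable (fun u : ℝ => u ^ p)).mul measurable_h).aestronglyMeasurable
  · filter_upwards [ae_restrict_mem measurableSet_Ioo] with u hu
    have h0 : (0:ℝ) < u ^ p := Real.rpow_pos_of_pos hu.1 p
    rw [Real.norm_eq_abs, abs_mul, abs_of_pos h0]
    calc u ^ p * |h u| ≤ u ^ p * 1 := by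
          apply mul_le_mul_of_nonneg_left _ h0.le
          rw [abs_le]
          exact ⟨by linarith [h_nonneg hu], h_le_one hu⟩
      _ = u ^ p := mul_one _

lemma decomp {s : ℝ} (hs : 0 < s) (n : ℕ) {u : ℝ} (hu : u ∈ Ioo (0:ℝ) 1) :
    u ^ (s-1)/(1-u) + 1/Real.log u
      = (∑ k ∈ Finset.range n, u ^ (s-1+k)) + u ^ (s+n-1) * h u
        + (1 - u ^ (s+n-1))/Real.log u := by
  obtain ⟨h0, h1⟩ := hu
  have hL : Real.log u < 0 := Real.log_neg h0 h1
  have hD : (1:ℝ) - u ≠ 0 := by linarith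
  have hD' : u - 1 ≠ 0 := by intro hc; apply hD; linarith [sub_eq_zero.mp hc]
  have hL' : Real.log u ≠ 0 := ne_of_lt hL
  have hsum : ∀ k : ℕ, u ^ (s-1+(k:ℝ)) = u ^ (s-1) * u ^ k := by
    intro k
    rw [Real.rpow_add h0, Real.rpow_natCast]
  have hgeom : ∑ k ∈ Finset.range n, u ^ (s-1+(k:ℝ))
      = u ^ (s-1) * ((u ^ n - 1)/(u - 1)) := by
    rw [← geom_sum_eq (by intro hc; rw [hc] at h1; linarith) n, Finset.mul_sum]
    exact Finset.sum_congr rfl fun k _ => hsum k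
  have hpn : u ^ (s+(n:ℝ)-1) = u ^ (s-1) * u ^ n := by
    rw [show s+(n:ℝ)-1 = (s-1) + (n:ℝ) by ring, Real.rpow_add h0, Real.rpow_natCast]
  rw [hgeom, hpn, h]
  field_simp
  ring

lemma integral_core {s : ℝ} (hs : 0 < s) (n : ℕ) :
    ∫ u in Ioo (0:ℝ) 1, (u ^ (s-1)/(1-u) + 1/Real.log u)
      = (∑ k ∈ Finset.range n, 1/(s+k)) + (∫ u in Ioo (0:ℝ) 1, u ^ (s+n-1) * h u)
        - Real.log (s+n) := by
  have hpn : (-1:ℝ) < s + n - 1 := by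
    have : (0:ℝ) ≤ n := Nat.cast_nonneg n
    linarith
  have hcongr : ∫ u in Ioo (0:ℝ) 1, (u ^ (s-1)/(1-u) + 1/Real.log u)
      = ∫ u in Ioo (0:ℝ) 1, ((∑ k ∈ Finset.range n, u ^ (s-1+k)) + u ^ (s+n-1) * h u
        + (1 - u ^ (s+n-1))/Real.log u) := by
    apply setIntegral_congr_fun measurableSet_Ioo
    intro u hu
    exact decomp hs n hu
  rw [hcongr]
  have hint1 : IntegrableOn (fun u : ℝ => ∑ k ∈ Finset.range n, u ^ (s-1+(k:ℝ)))
      (Ioo 0 1) volume := by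
    apply integrable_finset_sum
    intro k _
    apply integrableOn_rpow01
    have : (0:ℝ) ≤ k := Nat.cast_nonneg k
    linarith
  have hint2 := integrableOn_rpow_mul_h hpn
  have hint3 : IntegrableOn (fun u : ℝ => (1 - u ^ (s+(n:ℝ)-1))/Real.log u)
      (Ioo 0 1) volume := by
    apply ((integrableOn_q hpn).neg).congr
    filter_upwards with u
    simp only [Pi.neg_apply]
    ring
  have hint12 : IntegrableOn
      (fun u : ℝ => (∑ k ∈ Finset.range n, u ^ (s-1+(k:ℝ))) + u ^ (s+(n:ℝ)-1) * h u)
      (Ioo 0 1) volume := hint1.add hint2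
  rw [integral_add hint12 hint3, integral_add hint1 hint2]
  have e1 : ∫ u in Ioo (0:ℝ) 1, ∑ k ∈ Finset.range n, u ^ (s-1+(k:ℝ))
      = ∑ k ∈ Finset.range n, 1/(s+k) := by
    rw [MeasureTheory.integral_finset_sum]
    · apply Finset.sum_congr rfl
      intro k _
      have hk : (-1:ℝ) < s - 1 + k := by
        have : (0:ℝ) ≤ k := Nat.cast_nonneg k
        linarith
      rw [integral_rpow01 hk]
      congr 1
      ring
    · intro k _
      apply integrableOn_rpow01
      have : (0:ℝ) ≤ k := Nat.cast_nonneg k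
      linarith
  have e3 : ∫ u in Ioo (0:ℝ) 1, (1 - u ^ (s+(n:ℝ)-1))/Real.log u = - Real.log (s+n) := by
    have hcg : ∫ u in Ioo (0:ℝ) 1, (1 - u ^ (s+(n:ℝ)-1))/Real.log u
        = ∫ u in Ioo (0:ℝ) 1, -((u ^ (s+(n:ℝ)-1) - 1)/Real.log u) := by
      apply setIntegral_congr_fun measurableSet_Ioo
      intro u _
      ring
    rw [hcg, MeasureTheory.integral_neg, integral_q hpn]
    congr 1
    ring_nf
  rw [e1, e3]
  ring

lemma g_le {s : ℝ} (hs : 0 < s) (n : ℕ) :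
    (∫ u in Ioo (0:ℝ) 1, u ^ (s+n-1) * h u) ∈ Icc (0:ℝ) (1/(s+n)) := by
  have hpn : (-1:ℝ) < s + n - 1 := by
    have : (0:ℝ) ≤ n := Nat.cast_nonneg n
    linarith
  constructor
  · apply setIntegral_nonneg measurableSet_Ioo
    intro u hu
    exact mul_nonneg (Real.rpow_pos_of_pos hu.1 _).le (h_nonneg hu)
  · have := setIntegral_mono_on (integrableOn_rpow_mul_h hpn) (integrableOn_rpow01 hpn)
      measurableSet_Ioo (fun u hu => by
        calc u ^ (s+(n:ℝ)-1) * h u ≤ u ^ (s+(n:ℝ)-1) * 1 :=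
              mul_le_mul_of_nonneg_left (h_le_one hu) (Real.rpow_pos_of_pos hu.1 _).le
          _ = u ^ (s+(n:ℝ)-1) := mul_one _)
    rw [integral_rpow01 hpn] at this
    calc (∫ u in Ioo (0:ℝ) 1, u ^ (s+(n:ℝ)-1) * h u) ≤ 1/(s+n-1+1) := this
      _ = 1/(s+n) := by ring_nf

lemma integral_core_eq {s : ℝ} (hs : 0 < s) :
    ∫ u in Ioo (0:ℝ) 1, (u ^ (s-1)/(1-u) + 1/Real.log u)
      = -(deriv Real.Gamma s / Real.Gamma s) := by
  set C := ∫ u in Ioo (0:ℝ) 1, (u ^ (s-1)/(1-u) + 1/Real.log u) with hC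
  have key : ∀ n : ℕ, Real.log (s+n) - ∑ k ∈ Finset.range n, 1/(s+k)
      = (∫ u in Ioo (0:ℝ) 1, u ^ (s+n-1) * h u) - C := by
    intro n
    have := integral_core hs n
    rw [← hC] at this
    linarith
  have hg : Filter.Tendsto (fun n : ℕ => ∫ u in Ioo (0:ℝ) 1, u ^ (s+n-1) * h u)
      Filter.atTop (𝓝 0) := by
    have hb : Filter.Tendsto (fun n : ℕ => 1/(s+(n:ℝ))) Filter.atTop (𝓝 0) := by
      have h1 : Filter.Tendsto (fun n : ℕ => s + (n:ℝ)) Filter.atTop Filter.atTop :=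
        Filter.tendsto_atTop_add_const_left _ s tendsto_natCast_atTop_atTop
      simpa [one_div, Function.comp_def] using tendsto_inv_atTop_zero.comp h1
    apply tendsto_of_tendsto_of_tendsto_of_le_of_le' tendsto_const_nhds hb
    · filter_upwards with n using (g_le hs n).1
    · filter_upwards with n using (g_le hs n).2
  have h2 : Filter.Tendsto (fun n : ℕ => Real.log (s+n) - ∑ k ∈ Finset.range n, 1/(s+k))
      Filter.atTop (𝓝 (0 - C)) := by
    apply Filter.Tendsto.sub hg tendsto_const_nhds |>.congr'
    filter_upwards with n using (key n).symm
  have h3 := tendsto_psi s hs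
  have := tendsto_nhds_unique h2 h3
  linarith

noncomputable def K (s u y : ℝ) : ℝ :=
  if u < y then y⁻¹ * ((u ^ (s-1) - y)/((1-u)*Real.log u)) else 0

noncomputable def Cs (s u : ℝ) : ℝ := (1+|s-1|) * (1+u ^ (s-1)) + 1

lemma measurable_K (s : ℝ) : Measurable (Function.uncurry (K s)) := by
  unfold K Function.uncurry
  apply Measurable.ite (measurableSet_lt measurable_fst measurable_snd)
  · measurability
  · exact measurable_const

lemma Cs_pos {s u : ℝ} (hu : 0 < u) : 0 < Cs s u := by
  have h1 : (0:ℝ) < u ^ (s-1) := Real.rpow_pos_of_pos hu _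
  have := abs_nonneg (s-1)
  unfold Cs
  nlinarith

lemma K_bound {s : ℝ} (hs : 0 < s) {u y : ℝ} (hu : u ∈ Ioo (0:ℝ) 1)
    (hy : y ∈ Ioo (0:ℝ) 1) :
    ‖K s u y‖ ≤ (Ioi u).indicator (fun y => y⁻¹ * (Cs s u / (-Real.log u))) y := by
  obtain ⟨hu0, hu1⟩ := hu
  obtain ⟨hy0, hy1⟩ := hy
  have hL : Real.log u < 0 := Real.log_neg hu0 hu1
  have h1u : (0:ℝ) < 1 - u := by linarith
  have hrp : (0:ℝ) < u ^ (s-1) := Real.rpow_pos_of_pos hu0 _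
  unfold K
  by_cases huy : u < y
  · rw [if_pos huy, Set.indicator_of_mem (mem_Ioi.mpr huy)]
    rw [Real.norm_eq_abs, abs_mul, abs_of_pos (by positivity : (0:ℝ) < y⁻¹)]
    apply mul_le_mul_of_nonneg_left _ (by positivity : (0:ℝ) ≤ y⁻¹)
    rw [abs_div, abs_mul, abs_of_pos h1u, abs_of_neg hL]
    rw [div_le_div_iff₀ (mul_pos h1u (neg_pos.mpr hL)) (neg_pos.mpr hL)]
    have hnum : |u ^ (s-1) - y| ≤ Cs s u * (1 - u) := by
      have h2 : |u ^ (s-1) - y| ≤ |u ^ (s-1) - 1| + |1 - y| := by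
        have := abs_sub_abs_le_abs_sub (u ^ (s-1) - y) (u ^ (s-1) - 1)
        calc |u ^ (s-1) - y| = |(u ^ (s-1) - 1) + (1 - y)| := by ring_nf
          _ ≤ |u ^ (s-1) - 1| + |1 - y| := abs_add_le _ _
      have h3 : |u ^ (s-1) - 1| ≤ (1+|s-1|) * (1+u ^ (s-1)) * (1 - u) := by
        rw [abs_sub_comm]
        exact abs_one_sub_rpow (by linarith) ⟨hu0, hu1⟩
      have h4 : |1 - y| = 1 - y := abs_of_nonneg (by linarith)
      have h5 : 1 - y ≤ 1 - u := by linarith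
      unfold Cs
      nlinarith [mul_nonneg (mul_nonneg (by positivity : (0:ℝ) ≤ 1+|s-1|)
        (by positivity : (0:ℝ) ≤ 1+u ^ (s-1))) h1u.le]
    calc |u ^ (s-1) - y| * -Real.log u ≤ (Cs s u * (1 - u)) * -Real.log u := by
          apply mul_le_mul_of_nonneg_right hnum (by linarith)
      _ = Cs s u * ((1 - u) * -Real.log u) := by ring
    -- goal was |num| * (-log u) ≤ Cs/(-log u) * ((1-u) * (-log u)) ... need care
  · rw [if_neg huy, Set.indicator_of_notMem (by simpa using huy)]
    norm_num

lemma Ioi_inter_Ioo {u : ℝ} (hu : 0 ≤ u) : Ioi u ∩ Ioo (0:ℝ) 1 = Ioo u 1 := by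
  ext y
  simp only [mem_inter_iff, mem_Ioi, mem_Ioo]
  constructor
  · rintro ⟨h1, _, h3⟩; exact ⟨h1, h3⟩
  · rintro ⟨h1, h2⟩; exact ⟨h1, lt_of_le_of_lt hu h1, h2⟩

lemma Iio_inter_Ioo {y : ℝ} (hy : y ≤ 1) : Iio y ∩ Ioo (0:ℝ) 1 = Ioo 0 y := by
  ext u
  simp only [mem_inter_iff, mem_Iio, mem_Ioo]
  constructor
  · rintro ⟨h1, h2, _⟩; exact ⟨h2, h1⟩
  · rintro ⟨h1, h2⟩; exact ⟨h2, h1, lt_of_lt_of_le h2 hy⟩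

lemma K_slice_y {s y : ℝ} (hy : y ∈ Ioo (0:ℝ) 1) :
    ∫ u in Ioo (0:ℝ) 1, K s u y
      = ∫ u in Ioo (0:ℝ) y, y⁻¹ * ((u ^ (s-1) - y)/((1-u)*Real.log u)) := by
  have hind : (fun u => K s u y)
      = (Iio y).indicator (fun u => y⁻¹ * ((u ^ (s-1) - y)/((1-u)*Real.log u))) := by
    funext u
    unfold K
    rw [Set.indicator_apply]
    simp [mem_Iio]
  rw [hind, MeasureTheory.integral_indicator measurableSet_Iio,
    Measure.restrict_restrict measurableSet_Iio, Iio_inter_Ioo hy.2.le]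

lemma K_slice_u {s : ℝ} {u : ℝ} (hu : u ∈ Ioo (0:ℝ) 1) :
    ∫ y in Ioo (0:ℝ) 1, K s u y = -(u ^ (s-1)/(1-u) + 1/Real.log u) := by
  obtain ⟨hu0, hu1⟩ := hu
  have hL : Real.log u < 0 := Real.log_neg hu0 hu1
  have h1u : (0:ℝ) < 1 - u := by linarith
  have hind : (fun y => K s u y)
      = (Ioi u).indicator (fun y => y⁻¹ * ((u ^ (s-1) - y)/((1-u)*Real.log u))) := by
    funext y
    unfold K
    rw [Set.indicator_apply]
    simp [mem_Ioi]
  rw [hind, MeasureTheory.integral_indicator measurableSet_Ioi,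
    Measure.restrict_restrict measurableSet_Ioi, Ioi_inter_Ioo hu0.le,
    ← integral_Ioc_eq_integral_Ioo, ← intervalIntegral.integral_of_le hu1.le]
  have hcg : ∀ y ∈ uIcc u 1, y⁻¹ * ((u ^ (s-1) - y)/((1-u)*Real.log u))
      = (u ^ (s-1) / ((1-u)*Real.log u)) * y⁻¹ - ((1-u)*Real.log u)⁻¹ := by
    intro y hy
    rw [Set.uIcc_of_le hu1.le] at hy
    have hy0 : (0:ℝ) < y := lt_of_lt_of_le hu0 hy.1
    have hD1 : (1:ℝ) - u ≠ 0 := ne_of_gt h1u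
    have hD2 : Real.log u ≠ 0 := ne_of_lt hL
    have hy0' : y ≠ 0 := hy0.ne'
    field_simp
  rw [intervalIntegral.integral_congr hcg]
  have hi1 : IntervalIntegrable (fun y : ℝ => (u ^ (s-1) / ((1-u)*Real.log u)) * y⁻¹)
      volume u 1 := by
    apply ContinuousOn.intervalIntegrable
    apply ContinuousOn.mul continuousOn_const
    apply ContinuousOn.inv₀ continuousOn_id
    intro y hy
    rw [Set.uIcc_of_le hu1.le] at hy
    exact (lt_of_lt_of_le hu0 hy.1).ne'
  have hi2 : IntervalIntegrable (fun _ : ℝ => ((1-u)*Real.log u)⁻¹) volume u 1 :=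
    intervalIntegrable_const
  rw [intervalIntegral.integral_sub hi1 hi2, intervalIntegral.integral_const_mul,
    integral_inv (by
      rw [Set.uIcc_of_le hu1.le]
      rintro ⟨ha, _⟩
      linarith), intervalIntegral.integral_const]
  rw [show (1:ℝ)/u = u⁻¹ by ring, Real.log_inv]
  rw [smul_eq_mul]
  have hD1 : (1:ℝ) - u ≠ 0 := ne_of_gt h1u
  have hD2 : Real.log u ≠ 0 := ne_of_lt hL
  field_simp
  ring

lemma K_int_y {s : ℝ} (hs : 0 < s) {u : ℝ} (hu : u ∈ Ioo (0:ℝ) 1) :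
    Integrable (fun y => K s u y) (volume.restrict (Ioo (0:ℝ) 1)) := by
  obtain ⟨hu0, hu1⟩ := hu
  have hL : Real.log u < 0 := Real.log_neg hu0 hu1
  have hCs : 0 < Cs s u := Cs_pos hu0
  have hc : (0:ℝ) < Cs s u / (-Real.log u) := by
    apply div_pos hCs
    linarith
  apply Integrable.mono' (integrable_const (u⁻¹ * (Cs s u / (-Real.log u))))
  · exact ((measurable_K s).comp (measurable_const.prodMk measurable_id)).aestronglyMeasurable
  · filter_upwards [ae_restrict_mem measurableSet_Ioo] with y hy
    refine (K_bound hs ⟨hu0, hu1⟩ hy).trans ?_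
    by_cases hm : y ∈ Ioi u
    · rw [Set.indicator_of_mem hm]
      apply mul_le_mul_of_nonneg_right _ hc.le
      rw [mem_Ioi] at hm
      exact one_div y ▸ one_div u ▸ one_div_le_one_div_of_le hu0 hm.le
    · rw [Set.indicator_of_notMem hm]
      exact mul_nonneg (by positivity) hc.le

lemma indicator_bound_int {s : ℝ} {u : ℝ} (hu0 : 0 < u) (hu1 : u < 1) :
    Integrable ((Ioi u).indicator (fun y : ℝ => y⁻¹ * (Cs s u / (-Real.log u))))
      (volume.restrict (Ioo (0:ℝ) 1)) := by
  have hL : Real.log u < 0 := Real.log_neg hu0 hu1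
  have hCs : 0 < Cs s u := Cs_pos hu0
  have hc : (0:ℝ) < Cs s u / (-Real.log u) := by
    apply div_pos hCs; linarith
  apply Integrable.mono' (integrable_const (u⁻¹ * (Cs s u / (-Real.log u))))
  · apply Measurable.aestronglyMeasurable
    exact (measurable_id.inv.mul_const _).indicator measurableSet_Ioi
  · filter_upwards [ae_restrict_mem measurableSet_Ioo] with y hy
    by_cases hm : y ∈ Ioi u
    · rw [Set.indicator_of_mem hm, Real.norm_eq_abs,
        abs_of_nonneg (mul_nonneg (inv_nonneg.mpr hy.1.le) hc.le)]
      apply mul_le_mul_of_nonneg_right _ hc.le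
      rw [mem_Ioi] at hm
      exact one_div y ▸ one_div u ▸ one_div_le_one_div_of_le hu0 hm.le
    · rw [Set.indicator_of_notMem hm]
      simp only [norm_zero]
      exact mul_nonneg (inv_nonneg.mpr hu0.le) hc.le

lemma K_norm_int {s : ℝ} (hs : 0 < s) {u : ℝ} (hu : u ∈ Ioo (0:ℝ) 1) :
    ∫ y in Ioo (0:ℝ) 1, ‖K s u y‖ ≤ Cs s u := by
  obtain ⟨hu0, hu1⟩ := hu
  have hL : Real.log u < 0 := Real.log_neg hu0 hu1
  have h1 : ∫ y in Ioo (0:ℝ) 1, ‖K s u y‖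
      ≤ ∫ y in Ioo (0:ℝ) 1, (Ioi u).indicator (fun y => y⁻¹ * (Cs s u / (-Real.log u))) y := by
    apply integral_mono_ae ((K_int_y hs ⟨hu0, hu1⟩).norm) (indicator_bound_int hu0 hu1)
    filter_upwards [ae_restrict_mem measurableSet_Ioo] with y hy
    exact K_bound hs ⟨hu0, hu1⟩ hy
  refine h1.trans (le_of_eq ?_)
  rw [MeasureTheory.integral_indicator measurableSet_Ioi,
    Measure.restrict_restrict measurableSet_Ioi, Ioi_inter_Ioo hu0.le,
    ← integral_Ioc_eq_integral_Ioo, ← intervalIntegral.integral_of_le hu1.le,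
    intervalIntegral.integral_mul_const,
    integral_inv (by
      rw [Set.uIcc_of_le hu1.le]
      rintro ⟨ha, _⟩
      linarith)]
  rw [show (1:ℝ)/u = u⁻¹ by ring, Real.log_inv]
  have hne : Real.log u ≠ 0 := ne_of_lt hL
  field_simp

lemma Cs_int (s : ℝ) (hs : 0 < s) :
    IntegrableOn (fun u : ℝ => Cs s u) (Ioo (0:ℝ) 1) volume := by
  unfold Cs
  apply Integrable.add _ (integrable_const 1)
  apply Integrable.const_mul
  exact (integrable_const 1).add (integrableOn_rpow01 (by linarith))

lemma K_prod_int {s : ℝ} (hs : 0 < s) :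
    Integrable (Function.uncurry (K s))
      ((volume.restrict (Ioo (0:ℝ) 1)).prod (volume.restrict (Ioo (0:ℝ) 1))) := by
  rw [MeasureTheory.integrable_prod_iff ((measurable_K s).aestronglyMeasurable)]
  constructor
  · filter_upwards [ae_restrict_mem measurableSet_Ioo] with u hu
    exact K_int_y hs hu
  · apply Integrable.mono' (Cs_int s hs)
    · exact (((measurable_K s).norm.aestronglyMeasurable)).integral_prod_right'
    · filter_upwards [ae_restrict_mem measurableSet_Ioo] with u hu
      rw [Real.norm_eq_abs, abs_of_nonneg (integral_nonneg (fun y => norm_nonneg _))]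
      exact K_norm_int hs hu

lemma K_swap {s : ℝ} (hs : 0 < s) :
    ∫ y in Ioo (0:ℝ) 1, ∫ u in Ioo (0:ℝ) 1, K s u y
      = ∫ u in Ioo (0:ℝ) 1, ∫ y in Ioo (0:ℝ) 1, K s u y :=
  (MeasureTheory.integral_integral_swap (K_prod_int hs)).symm

lemma inner_eq {s : ℝ} {y : ℝ} (hy : y ∈ Ioo (0:ℝ) 1) :
    (∫ x in (0:ℝ)..1, ((x * y) ^ (s - 1) - y) / ((1 - x * y) * Real.log (x * y)))
      = ∫ u in Ioo (0:ℝ) 1, K s u y := by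
  have hy0 : y ≠ 0 := hy.1.ne'
  have hsub := intervalIntegral.integral_comp_mul_right (a := (0:ℝ)) (b := 1)
    (fun u => (u ^ (s-1) - y)/((1-u)*Real.log u)) hy0
  simp only [zero_mul, one_mul] at hsub
  rw [show (∫ x in (0:ℝ)..1, ((x * y) ^ (s - 1) - y) / ((1 - x * y) * Real.log (x * y)))
      = ∫ x in (0:ℝ)..1, (fun u => (u ^ (s-1) - y)/((1-u)*Real.log u)) (x * y) from rfl]
  rw [hsub, intervalIntegral.integral_of_le hy.1.le, integral_Ioc_eq_integral_Ioo,
    smul_eq_mul, ← MeasureTheory.integral_const_mul]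
  exact (K_slice_y hy).symm

end DG

open DG in
theorem digamma_double_integral (s : ℝ) (hs : 0 < s) :
    deriv Real.Gamma s / Real.Gamma s =
      ∫ y in (0:ℝ)..1, ∫ x in (0:ℝ)..1,
        ((x * y) ^ (s - 1) - y) / ((1 - x * y) * Real.log (x * y)) := by
  rw [intervalIntegral.integral_of_le (by norm_num : (0:ℝ) ≤ 1),
    MeasureTheory.integral_Ioc_eq_integral_Ioo]
  rw [setIntegral_congr_fun measurableSet_Ioo
    (fun y hy => inner_eq (s := s) hy)]
  rw [K_swap hs]
  rw [setIntegral_congr_fun measurableSet_Ioo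
    (fun u hu => K_slice_u (s := s) hu)]
  rw [MeasureTheory.integral_neg, integral_core_eq hs, neg_neg]
end
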